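/- Let σ_h > 0 and σ_ℰ > 0, let H be a real random variable with law gaussianReal 0 σ_h² and ℰ an independent real random variable with law gaussianReal 0 σ_ℰ², and set Ĥ = H + ℰ. Then the conditional distribution of H given Ĥ satisfies: for almost every value ĥ of Ĥ (with respect to the law of Ĥ, which is gaussianReal 0 (σ_h²+σ_ℰ²)), the conditional law of H given Ĥ = ĥ is the Gaussian distribution gaussianReal (δ·ĥ) (δ·σ_ℰ²), where δ = σ_h²/(σ_h² + σ_ℰ²). -/

import Mathlib

open MeasureTheory ProbabilityTheory Real

noncomputable def postKernel (a b : NNReal) : ProbabilityTheory.Kernel ℝ ℝ :=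
  ProbabilityTheory.Kernel.withDensity (ProbabilityTheory.Kernel.const ℝ volume)
    (fun x y => gaussianPDF (((a / (a + b) : NNReal) : ℝ) * x) (a / (a + b) * b) y)

lemma measurable_post (a b : NNReal) :
    Measurable (Function.uncurry
      (fun x y => gaussianPDF (((a / (a + b) : NNReal) : ℝ) * x) (a / (a + b) * b) y)) := by
  apply Measurable.ennreal_ofReal
  unfold gaussianPDFReal
  fun_prop

lemma postKernel_apply (a b : NNReal) (x : ℝ) :
    postKernel a b x = volume.withDensity
      (gaussianPDF (((a / (a + b) : NNReal) : ℝ) * x) (a / (a + b) * b)) := by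
  rw [postKernel, ProbabilityTheory.Kernel.withDensity_apply _ (measurable_post a b),
    ProbabilityTheory.Kernel.const_apply]

lemma postKernel_apply' (a b : NNReal) (hc : a / (a + b) * b ≠ 0) (x : ℝ) :
    postKernel a b x = gaussianReal (((a / (a + b) : NNReal) : ℝ) * x) (a / (a + b) * b) := by
  rw [postKernel_apply, gaussianReal_of_var_ne_zero _ hc]

lemma markov (a b : NNReal) (hc : a / (a + b) * b ≠ 0) : IsMarkovKernel (postKernel a b) :=
  ⟨fun x => by rw [postKernel_apply' a b hc x]; infer_instance⟩

lemma key_pdf_eq (a b : NNReal) (ha : a ≠ 0) (hb : b ≠ 0) (x h : ℝ) :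
    gaussianPDFReal 0 a h * gaussianPDFReal h b x
      = gaussianPDFReal 0 (a + b) x * gaussianPDFReal (((a / (a + b) : NNReal) : ℝ) * x)
          (a / (a + b) * b) h := by
  have ha' : (0:ℝ) < a := lt_of_le_of_ne (a.coe_nonneg) (by exact_mod_cast (Ne.symm ha))
  have hb' : (0:ℝ) < b := lt_of_le_of_ne (b.coe_nonneg) (by exact_mod_cast (Ne.symm hb))
  have hab : (0:ℝ) < (a:ℝ) + b := by linarith
  have hδ : ((a / (a + b) * b : NNReal) : ℝ) = (a:ℝ) * b / ((a:ℝ) + b) := by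
    push_cast; field_simp
  have hδm : (((a / (a + b) : NNReal)) : ℝ) = (a:ℝ) / ((a:ℝ) + b) := by push_cast; ring
  simp only [gaussianPDFReal, hδ, hδm, NNReal.coe_add]
  have hpi : (0:ℝ) < 2 * π := by positivity
  rw [mul_mul_mul_comm, mul_mul_mul_comm ((√(2 * π * ((a:ℝ)+b)))⁻¹)]
  congr 1
  · rw [← mul_inv, ← mul_inv, ← Real.sqrt_mul (by positivity), ← Real.sqrt_mul (by positivity)]
    congr 1
    field_simp
  · rw [← Real.exp_add, ← Real.exp_add]
    congr 1
    field_simp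
    ring

lemma key_pdf_eq' (a b : NNReal) (ha : a ≠ 0) (hb : b ≠ 0) (x h : ℝ) :
    gaussianPDF 0 a h * gaussianPDF h b x
      = gaussianPDF 0 (a + b) x * gaussianPDF (((a / (a + b) : NNReal) : ℝ) * x)
          (a / (a + b) * b) h := by
  simp only [gaussianPDF]
  rw [← ENNReal.ofReal_mul (gaussianPDFReal_nonneg _ _ _),
    ← ENNReal.ofReal_mul (gaussianPDFReal_nonneg _ _ _), key_pdf_eq a b ha hb]

lemma measurable_gpdf2 (a b : NNReal) :
    Measurable (fun p : ℝ × ℝ => gaussianPDF p.1 b p.2) := by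
  apply Measurable.ennreal_ofReal
  unfold gaussianPDFReal
  fun_prop
set_option maxHeartbeats 1000000 in
lemma joint_eq (a b : NNReal) (ha : a ≠ 0) (hb : b ≠ 0) :
    ((gaussianReal 0 a).prod (gaussianReal 0 b)).map (fun p : ℝ × ℝ => (p.1 + p.2, p.1))
      = (gaussianReal 0 (a + b)) ⊗ₘ postKernel a b := by
  have hc : a / (a + b) * b ≠ 0 := by
    simp only [ne_eq, mul_eq_zero, div_eq_zero_iff, not_or]
    exact ⟨⟨ha, by simp [ha]⟩, hb⟩
  haveI := markov a b hc
  have hab : a + b ≠ 0 := by simp [ha]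
  have hT : Measurable (fun p : ℝ × ℝ => (p.1 + p.2, p.1)) :=
    (measurable_fst.add measurable_snd).prodMk measurable_fst
  ext s hs
  have hind : Measurable (s.indicator (1 : ℝ × ℝ → ENNReal)) := measurable_one.indicator hs
  have hpost2 : Measurable (fun p : ℝ × ℝ =>
      gaussianPDF (((a / (a + b) : NNReal) : ℝ) * p.2) (a / (a + b) * b) p.1) := by
    apply Measurable.ennreal_ofReal; unfold gaussianPDFReal; fun_prop
  have hgpdf2 : Measurable (fun p : ℝ × ℝ => gaussianPDF p.1 b p.2) := by
    apply Measurable.ennreal_ofReal; unfold gaussianPDFReal; fun_prop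
  have hgpdf2' : Measurable (fun p : ℝ × ℝ => gaussianPDF p.2 b p.1) := by
    apply Measurable.ennreal_ofReal; unfold gaussianPDFReal; fun_prop
  rw [Measure.map_apply hT hs, Measure.compProd_apply hs, Measure.prod_apply (hT hs)]
  have h1 : ∀ h : ℝ,
      gaussianReal 0 b (Prod.mk h ⁻¹' ((fun p : ℝ × ℝ => (p.1 + p.2, p.1)) ⁻¹' s))
        = ∫⁻ x, s.indicator 1 (x, h) * gaussianPDF h b x := by
    intro h
    have hpre : Prod.mk h ⁻¹' ((fun p : ℝ × ℝ => (p.1 + p.2, p.1)) ⁻¹' s)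
        = (fun e => h + e) ⁻¹' ((fun x => (x, h)) ⁻¹' s) := rfl
    have hsm : MeasurableSet ((fun x : ℝ => (x, h)) ⁻¹' s) := hs.preimage measurable_prodMk_right
    rw [hpre, ← Measure.map_apply (measurable_const_add h) hsm,
      gaussianReal_map_const_add, zero_add, gaussianReal_apply _ hb, ← lintegral_indicator hsm]
    congr 1
    ext x
    by_cases hx : (x, h) ∈ s <;> simp [Set.indicator_apply, hx]
  simp_rw [h1]
  have hma : Measurable fun h : ℝ => ∫⁻ x, s.indicator 1 (x, h) * gaussianPDF h b x := by
    apply Measurable.lintegral_prod_right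
    exact (hind.comp measurable_swap).mul hgpdf2
  rw [gaussianReal_of_var_ne_zero 0 ha,
    lintegral_withDensity_eq_lintegral_mul _ (measurable_gaussianPDF 0 a) hma]
  have h2 : ∀ h : ℝ, gaussianPDF 0 a h *
        (∫⁻ x, s.indicator 1 (x, h) * gaussianPDF h b x)
      = ∫⁻ x, s.indicator 1 (x, h) * (gaussianPDF 0 a h * gaussianPDF h b x) := by
    intro h
    rw [← lintegral_const_mul _
      (show Measurable fun x : ℝ => s.indicator 1 (x, h) * gaussianPDF h b x from
        (hind.comp measurable_prodMk_right).mul (measurable_gaussianPDF h b))]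
    congr 1; ext x; ring
  simp only [Pi.mul_apply]
  simp_rw [h2, key_pdf_eq' a b ha hb]
  rw [lintegral_lintegral_swap
    (((hind.comp measurable_swap).mul
      (((measurable_gaussianPDF 0 (a + b)).comp measurable_snd).mul
        hpost2)).aemeasurable)]
  have h3 : ∀ x : ℝ,
      (∫⁻ h, s.indicator 1 (x, h) * (gaussianPDF 0 (a + b) x *
        gaussianPDF (((a / (a + b) : NNReal) : ℝ) * x) (a / (a + b) * b) h))
      = gaussianPDF 0 (a + b) x * postKernel a b x (Prod.mk x ⁻¹' s) := by
    intro x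
    have hsm : MeasurableSet (Prod.mk x ⁻¹' s) := hs.preimage measurable_prodMk_left
    rw [postKernel_apply, withDensity_apply _ hsm, ← lintegral_indicator hsm,
      ← lintegral_const_mul _
        ((measurable_gaussianPDF (((a / (a + b) : NNReal) : ℝ) * x)
          (a / (a + b) * b)).indicator hsm)]
    congr 1
    ext h
    by_cases hx : (x, h) ∈ s <;>
      simp [Set.indicator_apply, Set.mem_preimage, hx]
  simp_rw [h3]
  rw [gaussianReal_of_var_ne_zero 0 hab,
    lintegral_withDensity_eq_lintegral_mul _ (measurable_gaussianPDF 0 (a + b))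
      (ProbabilityTheory.Kernel.measurable_kernel_prodMk_left hs)]
  rfl

/-- The a posteriori law of a Gaussian channel `H` given the noisy estimate `Ĥ = H + ℰ`
is Gaussian with mean `δ·Ĥ` and variance `δ·σ_ℰ²`, where `δ = σ_h²/(σ_h²+σ_ℰ²)`. -/
theorem posterior_gaussian_given_noisy_estimate {Ω : Type*} [MeasurableSpace Ω]
    (μ : Measure Ω) [IsProbabilityMeasure μ]
    (σh σε : NNReal) (hσh : 0 < σh) (hσε : 0 < σε)
    (H E : Ω → ℝ) (hH : Measurable H) (hE : Measurable E)
    (hlawH : μ.map H = gaussianReal 0 (σh ^ 2))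
    (hlawE : μ.map E = gaussianReal 0 (σε ^ 2))
    (hindep : IndepFun H E μ)
    (Hhat : Ω → ℝ) (hHhat : Hhat = H + E)
    (δ : NNReal) (hδ : δ = σh ^ 2 / (σh ^ 2 + σε ^ 2)) :
    μ.map Hhat = gaussianReal 0 (σh ^ 2 + σε ^ 2) ∧
      ∀ᵐ hv ∂(μ.map Hhat),
        condDistrib H Hhat μ hv = gaussianReal ((δ : ℝ) * hv) (δ * σε ^ 2) := by
  set a := σh ^ 2 with ha_def
  set b := σε ^ 2 with hb_def
  have ha : a ≠ 0 := pow_ne_zero _ hσh.ne'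
  have hb : b ≠ 0 := pow_ne_zero _ hσε.ne'
  have hc : a / (a + b) * b ≠ 0 := by
    simp only [ne_eq, mul_eq_zero, div_eq_zero_iff, not_or]
    exact ⟨⟨ha, by simp [ha]⟩, hb⟩
  haveI := markov a b hc
  have hHm : Measurable Hhat := by rw [hHhat]; exact hH.add hE
  have hT : Measurable (fun p : ℝ × ℝ => (p.1 + p.2, p.1)) :=
    (measurable_fst.add measurable_snd).prodMk measurable_fst
  have hpair : Measurable (fun ω => (H ω, E ω)) := hH.prodMk hE
  have hjointHE : μ.map (fun ω => (H ω, E ω)) = (gaussianReal 0 a).prod (gaussianReal 0 b) := by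
    rw [← hlawH, ← hlawE]
    exact (indepFun_iff_map_prod_eq_prod_map_map hH.aemeasurable hE.aemeasurable).mp hindep
  have hjoint : μ.map (fun ω => (Hhat ω, H ω)) = gaussianReal 0 (a + b) ⊗ₘ postKernel a b := by
    have hcomp : (fun ω => (Hhat ω, H ω))
        = (fun p : ℝ × ℝ => (p.1 + p.2, p.1)) ∘ (fun ω => (H ω, E ω)) := by
      funext ω; simp [hHhat]
    rw [hcomp, ← Measure.map_map hT hpair, hjointHE, joint_eq a b ha hb]
  have hmapHhat : μ.map Hhat = gaussianReal 0 (a + b) := by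
    have h1 : μ.map Hhat = (μ.map (fun ω => (Hhat ω, H ω))).map Prod.fst := by
      rw [Measure.map_map measurable_fst (hHm.prodMk hH)]
      rfl
    rw [h1, hjoint, ← Measure.fst, Measure.fst_compProd]
  refine ⟨hmapHhat, ?_⟩
  have hae := condDistrib_ae_eq_of_measure_eq_compProd_of_measurable hHm hH (κ := postKernel a b)
    (by rw [hjoint, hmapHhat])
  filter_upwards [hae] with x hx
  rw [hx, postKernel_apply' a b hc x, hδ]
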